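/- With the notation of the L_h graphs, the sequences a(h) = b_{{tr_1,tr_2,hd},∅}(h) and c(h) = b_{{tr_1,tr_2},{hd}}(h) satisfy the mutual linear recurrence a(h) = t³·a(h-1) + t²·c(h-1) and c(h) = a(h-1) + t·c(h-1), with initial conditions a(0)=t², c(0)=1. -/

import Mathlib

open Finset

/-- The set of edges of `G` contained in the vertex subset `S`. -/
def edgeIn {V : Type*} [Fintype V] [DecidableEq V] (G : SimpleGraph V) [DecidableRel G.Adj]
    (S : Finset V) : Finset (Sym2 V) :=
  G.edgeFinset.filter (· ∈ S.sym2)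

/-- The restricted bivariate Ising polynomial `Z(G;B,C;t,y)`: the sum ranges over
all `S` with `B ⊆ S ⊆ V(G) ∖ C`. -/
def ZbiBC {V : Type*} [Fintype V] [DecidableEq V] (G : SimpleGraph V) [DecidableRel G.Adj]
    (B C : Finset V) (t y : ℚ) : ℚ :=
  ∑ S ∈ univ.filter (fun S : Finset V => B ⊆ S ∧ Disjoint S C),
    t ^ ((edgeIn G S).card + (edgeIn G Sᶜ).card) * y ^ S.card

instance fromRel.decidableRel {V : Type*} [DecidableEq V] (r : V → V → Prop) [DecidableRel r] :
    DecidableRel (SimpleGraph.fromRel r).Adj := fun a b =>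
  inferInstanceAs (Decidable (a ≠ b ∧ (r a b ∨ r b a)))

/-- One-directional adjacency of the graph `L_h`: path vertices `inl i` are consecutive,
and each of the two apex vertices `inr 0 = tr₁`, `inr 1 = tr₂` is joined to every
path vertex. -/
def lRel (h : ℕ) : Fin (h + 1) ⊕ Fin 2 → Fin (h + 1) ⊕ Fin 2 → Bool
  | .inl i, .inl j => (i : ℕ) + 1 == (j : ℕ)
  | .inl _, .inr _ => true
  | _, _ => false

/-- The graph `L_h`: a path `p₀, …, p_h` (with `h` edges) together with two apex vertices
`tr₁(h) = inr 0` and `tr₂(h) = inr 1`, each adjacent to all path vertices.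
The head `hd(h)` is the endpoint `inl (Fin.last h)`. -/
def Lgraph (h : ℕ) : SimpleGraph (Fin (h + 1) ⊕ Fin 2) :=
  SimpleGraph.fromRel (fun a b => lRel h a b = true)

instance (h : ℕ) : DecidableRel (Lgraph h).Adj := fromRel.decidableRel _

/-- `a(h) = b_{{tr₁,tr₂,hd},∅}(h) = Z(L_h; {tr₁(h),tr₂(h),hd(h)}, ∅; t, 1)`. -/
def aSeq (t : ℚ) (h : ℕ) : ℚ :=
  ZbiBC (Lgraph h) {Sum.inr 0, Sum.inr 1, Sum.inl (Fin.last h)} ∅ t 1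

/-- `c(h) = b_{{tr₁,tr₂},{hd}}(h) = Z(L_h; {tr₁(h),tr₂(h)}, {hd(h)}; t, 1)`. -/
def cSeq (t : ℚ) (h : ℕ) : ℚ :=
  ZbiBC (Lgraph h) {Sum.inr 0, Sum.inr 1} {Sum.inl (Fin.last h)} t 1
namespace ZLrec

abbrev Vt (h : ℕ) := Fin (h+1) ⊕ Fin 2

def f (h : ℕ) : Vt h → Vt (h+1) := Sum.map Fin.castSucc id

lemma f_inj (h : ℕ) : Function.Injective (f h) :=
  (Fin.castSucc_injective _).sumMap Function.injective_id

def nv (h : ℕ) : Vt (h+1) := Sum.inl (Fin.last (h+1))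

lemma f_ne_nv (h : ℕ) (x : Vt h) : f h x ≠ nv h := by
  cases x with
  | inl i => simp [f, nv]
  | inr k => simp [f, nv]

lemma exists_f (h : ℕ) (v : Vt (h+1)) (hv : v ≠ nv h) : ∃ x, f h x = v := by
  cases v with
  | inl j =>
    have hj : j ≠ Fin.last (h+1) := by simpa [nv] using hv
    obtain ⟨i, rfl⟩ := Fin.exists_castSucc_eq.mpr hj
    exact ⟨.inl i, rfl⟩
  | inr k => exact ⟨.inr k, rfl⟩

lemma adj_f (h : ℕ) {x y : Vt h} : (Lgraph (h+1)).Adj (f h x) (f h y) ↔ (Lgraph h).Adj x y := by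
  cases x <;> cases y <;>
    simp [Lgraph, SimpleGraph.fromRel_adj, f, lRel, Fin.ext_iff]

lemma adj_nv (h : ℕ) (x : Vt h) :
    (Lgraph (h+1)).Adj (nv h) (f h x) ↔
      x ∈ ({Sum.inl (Fin.last h), Sum.inr 0, Sum.inr 1} : Finset (Vt h)) := by
  cases x with
  | inl i =>
    simp [Lgraph, SimpleGraph.fromRel_adj, f, nv, lRel, Fin.ext_iff]
    omega
  | inr k =>
    simp [Lgraph, SimpleGraph.fromRel_adj, f, nv, lRel]
    omega


lemma mem_edgeIn {V : Type*} [Fintype V] [DecidableEq V] {G : SimpleGraph V}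
    [DecidableRel G.Adj] {S : Finset V} {a b : V} :
    s(a, b) ∈ edgeIn G S ↔ G.Adj a b ∧ a ∈ S ∧ b ∈ S := by
  simp [edgeIn, Finset.mk_mem_sym2_iff]

lemma edgeIn_image (h : ℕ) (T : Finset (Vt h)) :
    edgeIn (Lgraph (h+1)) (T.image (f h)) = (edgeIn (Lgraph h) T).image (Sym2.map (f h)) := by
  apply Finset.Subset.antisymm
  · intro z hz
    induction z using Sym2.ind with
    | _ a b =>
      rw [mem_edgeIn] at hz
      obtain ⟨hadj, ha, hb⟩ := hz
      obtain ⟨x, hx, rfl⟩ := Finset.mem_image.mp ha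
      obtain ⟨y, hy, rfl⟩ := Finset.mem_image.mp hb
      exact Finset.mem_image.mpr ⟨s(x, y), mem_edgeIn.mpr ⟨(adj_f h).mp hadj, hx, hy⟩,
        Sym2.map_pair_eq _ _ _⟩
  · intro z hz
    obtain ⟨z', hz', rfl⟩ := Finset.mem_image.mp hz
    induction z' using Sym2.ind with
    | _ x y =>
      rw [mem_edgeIn] at hz'
      rw [Sym2.map_pair_eq]
      exact mem_edgeIn.mpr ⟨(adj_f h).mpr hz'.1, Finset.mem_image_of_mem _ hz'.2.1,
        Finset.mem_image_of_mem _ hz'.2.2⟩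

lemma card_edgeIn_image (h : ℕ) (T : Finset (Vt h)) :
    (edgeIn (Lgraph (h+1)) (T.image (f h))).card = (edgeIn (Lgraph h) T).card := by
  rw [edgeIn_image, Finset.card_image_of_injective _ (Sym2.map.injective (f_inj h))]

def tri (h : ℕ) : Finset (Vt h) := {Sum.inl (Fin.last h), Sum.inr 0, Sum.inr 1}

lemma edgeIn_insert_nv (h : ℕ) (T : Finset (Vt h)) :
    edgeIn (Lgraph (h+1)) (insert (nv h) (T.image (f h)))
      = edgeIn (Lgraph (h+1)) (T.image (f h))
        ∪ (T ∩ tri h).image (fun x => s(nv h, f h x)) := by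
  apply Finset.Subset.antisymm
  · intro z hz
    induction z using Sym2.ind with
    | _ a b =>
      rw [mem_edgeIn] at hz
      obtain ⟨hadj, ha, hb⟩ := hz
      rw [Finset.mem_union]
      rcases Finset.mem_insert.mp ha with rfl | ha
      · rcases Finset.mem_insert.mp hb with rfl | hb
        · exact absurd rfl hadj.ne
        · obtain ⟨y, hy, rfl⟩ := Finset.mem_image.mp hb
          exact Or.inr (Finset.mem_image.mpr
            ⟨y, Finset.mem_inter.mpr ⟨hy, (adj_nv h y).mp hadj⟩, rfl⟩)
      · rcases Finset.mem_insert.mp hb with rfl | hb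
        · obtain ⟨x, hx, rfl⟩ := Finset.mem_image.mp ha
          refine Or.inr (Finset.mem_image.mpr
            ⟨x, Finset.mem_inter.mpr ⟨hx, (adj_nv h x).mp hadj.symm⟩, ?_⟩)
          exact Sym2.eq_swap
        · exact Or.inl (mem_edgeIn.mpr ⟨hadj, ha, hb⟩)
  · rw [Finset.union_subset_iff]
    constructor
    · intro z hz
      simp only [edgeIn, Finset.mem_filter] at hz ⊢
      exact ⟨hz.1, Finset.sym2_mono (Finset.subset_insert _ _) hz.2⟩
    · intro z hz
      obtain ⟨x, hx, rfl⟩ := Finset.mem_image.mp hz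
      rw [Finset.mem_inter] at hx
      exact mem_edgeIn.mpr ⟨(adj_nv h x).mpr hx.2, Finset.mem_insert_self _ _,
        Finset.mem_insert_of_mem (Finset.mem_image_of_mem _ hx.1)⟩

lemma card_edgeIn_insert_nv (h : ℕ) (T : Finset (Vt h)) :
    (edgeIn (Lgraph (h+1)) (insert (nv h) (T.image (f h)))).card
      = (edgeIn (Lgraph h) T).card + (T ∩ tri h).card := by
  rw [edgeIn_insert_nv, Finset.card_union_of_disjoint, card_edgeIn_image]
  · congr 1
    apply Finset.card_image_of_injOn
    intro x _ y _ hxy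
    simp only [Sym2.eq, Sym2.rel_iff', Prod.mk.injEq, Prod.swap_prod_mk] at hxy
    rcases hxy with ⟨-, hf⟩ | ⟨hf, -⟩
    · exact f_inj h hf
    · exact absurd hf.symm (f_ne_nv h y)
  · rw [Finset.disjoint_right]
    intro z hz hz'
    obtain ⟨x, -, rfl⟩ := Finset.mem_image.mp hz
    rw [edgeIn_image, Finset.mem_image] at hz'
    obtain ⟨z', -, hmap⟩ := hz'
    induction z' using Sym2.ind with
    | _ u v =>
      rw [Sym2.map_pair_eq] at hmap
      simp only [Sym2.eq, Sym2.rel_iff', Prod.mk.injEq, Prod.swap_prod_mk] at hmap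
      rcases hmap with ⟨hf, -⟩ | ⟨-, hf⟩ <;> exact f_ne_nv h _ hf

lemma compl_image (h : ℕ) (T : Finset (Vt h)) :
    (T.image (f h))ᶜ = insert (nv h) (Tᶜ.image (f h)) := by
  ext v
  by_cases hv : v = nv h
  · subst hv
    simp only [Finset.mem_compl, Finset.mem_insert_self, iff_true]
    intro hmem
    obtain ⟨x, -, hx⟩ := Finset.mem_image.mp hmem
    exact f_ne_nv h x hx
  · obtain ⟨x, rfl⟩ := exists_f h v hv
    simp only [Finset.mem_compl, Finset.mem_insert, (f_inj h).mem_finset_image]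
    simp [f_ne_nv h x]

lemma compl_insert (h : ℕ) (T : Finset (Vt h)) :
    (insert (nv h) (T.image (f h)))ᶜ = Tᶜ.image (f h) := by
  rw [Finset.compl_insert, compl_image, Finset.erase_insert]
  rw [Finset.mem_image]
  rintro ⟨x, -, hx⟩
  exact f_ne_nv h x hx

def wexp (h : ℕ) (S : Finset (Fin (h+1) ⊕ Fin 2)) : ℕ :=
  (edgeIn (Lgraph h) S).card + (edgeIn (Lgraph h) Sᶜ).card

lemma wexp_insert (h : ℕ) (T : Finset (Vt h)) :
    wexp (h+1) (insert (nv h) (T.image (f h))) = wexp h T + (T ∩ tri h).card := by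
  unfold wexp
  rw [card_edgeIn_insert_nv, compl_insert, card_edgeIn_image]
  omega

lemma wexp_image (h : ℕ) (T : Finset (Vt h)) :
    wexp (h+1) (T.image (f h)) = wexp h T + (Tᶜ ∩ tri h).card := by
  unfold wexp
  rw [card_edgeIn_image, compl_image, card_edgeIn_insert_nv]
  omega


lemma card_inter_tri (h : ℕ) {T : Finset (Vt h)} (h0 : Sum.inr 0 ∈ T) (h1 : Sum.inr 1 ∈ T) :
    (T ∩ tri h).card = if Sum.inl (Fin.last h) ∈ T then 3 else 2 := by
  by_cases hhd : Sum.inl (Fin.last h) ∈ T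
  · rw [if_pos hhd, Finset.inter_eq_right.mpr (by
      intro x hx
      simp only [tri, Finset.mem_insert, Finset.mem_singleton] at hx
      rcases hx with rfl | rfl | rfl <;> assumption)]
    rw [tri, Finset.card_insert_of_notMem (by simp),
      Finset.card_insert_of_notMem (by simp), Finset.card_singleton]
  · rw [if_neg hhd]
    have : T ∩ tri h = {Sum.inr 0, Sum.inr 1} := by
      ext x
      simp only [Finset.mem_inter, tri, Finset.mem_insert, Finset.mem_singleton]
      constructor
      · rintro ⟨hxT, rfl | rfl | rfl⟩
        · exact absurd hxT hhd
        · exact Or.inl rfl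
        · exact Or.inr rfl
      · rintro (rfl | rfl)
        · exact ⟨h0, Or.inr (Or.inl rfl)⟩
        · exact ⟨h1, Or.inr (Or.inr rfl)⟩
    rw [this, Finset.card_insert_of_notMem (by simp), Finset.card_singleton]

lemma card_compl_inter_tri (h : ℕ) {T : Finset (Vt h)} (h0 : Sum.inr 0 ∈ T)
    (h1 : Sum.inr 1 ∈ T) :
    (Tᶜ ∩ tri h).card = if Sum.inl (Fin.last h) ∈ T then 0 else 1 := by
  by_cases hhd : Sum.inl (Fin.last h) ∈ T
  · rw [if_pos hhd]
    rw [Finset.card_eq_zero]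
    ext x
    simp only [Finset.mem_inter, Finset.mem_compl, tri, Finset.mem_insert,
      Finset.mem_singleton, Finset.notMem_empty, iff_false, not_and]
    rintro hx (rfl | rfl | rfl) <;> exact hx (by assumption)
  · rw [if_neg hhd]
    have : Tᶜ ∩ tri h = {Sum.inl (Fin.last h)} := by
      ext x
      simp only [Finset.mem_inter, Finset.mem_compl, tri, Finset.mem_insert,
        Finset.mem_singleton]
      constructor
      · rintro ⟨hx, rfl | rfl | rfl⟩
        · rfl
        · exact absurd h0 hx
        · exact absurd h1 hx
      · rintro rfl
        exact ⟨hhd, Or.inl rfl⟩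
    rw [this, Finset.card_singleton]

lemma aSeq_eq (t : ℚ) (h : ℕ) :
    aSeq t h = ∑ S ∈ univ.filter
        (fun S : Finset (Vt h) =>
          (Sum.inr 0 ∈ S ∧ Sum.inr 1 ∈ S) ∧ Sum.inl (Fin.last h) ∈ S),
      t ^ wexp h S := by
  rw [aSeq, ZbiBC]
  apply Finset.sum_congr
  · apply Finset.filter_congr
    intro S _
    simp [Finset.insert_subset_iff, and_assoc]
  · intro S _
    simp [wexp]

lemma cSeq_eq (t : ℚ) (h : ℕ) :
    cSeq t h = ∑ S ∈ univ.filter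
        (fun S : Finset (Vt h) =>
          (Sum.inr 0 ∈ S ∧ Sum.inr 1 ∈ S) ∧ Sum.inl (Fin.last h) ∉ S),
      t ^ wexp h S := by
  rw [cSeq, ZbiBC]
  apply Finset.sum_congr
  · apply Finset.filter_congr
    intro S _
    simp [Finset.insert_subset_iff, Finset.disjoint_singleton_right, and_assoc]
  · intro S _
    simp [wexp]

lemma sum_a (t : ℚ) (h : ℕ) :
    aSeq t (h+1) = ∑ S' ∈ univ.filter
        (fun S' : Finset (Vt h) => Sum.inr 0 ∈ S' ∧ Sum.inr 1 ∈ S'),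
      t ^ (wexp h S' + (S' ∩ tri h).card) := by
  rw [aSeq, ZbiBC]
  simp only [one_pow, mul_one]
  refine Finset.sum_nbij' (fun S => univ.filter fun x => f h x ∈ S)
    (fun S' => insert (nv h) (S'.image (f h))) ?_ ?_ ?_ ?_ ?_
  · intro S hS
    rw [Finset.mem_filter] at hS
    obtain ⟨-, hsub, -⟩ := hS
    rw [Finset.insert_subset_iff, Finset.insert_subset_iff, Finset.singleton_subset_iff] at hsub
    simp only [Finset.mem_filter, Finset.mem_univ, true_and]
    exact ⟨hsub.1, hsub.2.1⟩
  · intro S' hS'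
    rw [Finset.mem_filter] at hS'
    simp only [Finset.mem_filter, Finset.mem_univ, true_and, Finset.insert_subset_iff,
      Finset.singleton_subset_iff]
    refine ⟨⟨?_, ?_, ?_⟩, Finset.disjoint_empty_right _⟩
    · exact Finset.mem_insert_of_mem (Finset.mem_image_of_mem _ hS'.2.1)
    · exact Finset.mem_insert_of_mem (Finset.mem_image_of_mem _ hS'.2.2)
    · exact Finset.mem_insert_self _ _
  · intro S hS
    rw [Finset.mem_filter] at hS
    obtain ⟨-, hsub, -⟩ := hS
    rw [Finset.insert_subset_iff, Finset.insert_subset_iff, Finset.singleton_subset_iff] at hsub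
    ext v
    by_cases hv : v = nv h
    · subst hv
      exact iff_of_true (Finset.mem_insert_self _ _) hsub.2.2
    · obtain ⟨x, rfl⟩ := exists_f h v hv
      simp only [Finset.mem_insert, (f_inj h).mem_finset_image, Finset.mem_filter,
        Finset.mem_univ, true_and]
      constructor
      · rintro (hc | hx)
        · exact absurd hc (f_ne_nv h x)
        · exact hx
      · intro hx
        exact Or.inr hx
  · intro S' _
    ext x
    simp only [Finset.mem_filter, Finset.mem_univ, true_and, Finset.mem_insert,
      (f_inj h).mem_finset_image]
    constructor
    · rintro (hc | hx)
      · exact absurd hc (f_ne_nv h x)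
      · exact hx
    · intro hx
      exact Or.inr hx
  · intro S hS
    rw [Finset.mem_filter] at hS
    obtain ⟨-, hsub, -⟩ := hS
    rw [Finset.insert_subset_iff, Finset.insert_subset_iff, Finset.singleton_subset_iff] at hsub
    have hrepr : S = insert (nv h) ((univ.filter fun x => f h x ∈ S).image (f h)) := by
      ext v
      by_cases hv : v = nv h
      · subst hv
        simp only [Finset.mem_insert, true_or, iff_true]
        exact hsub.2.2
      · obtain ⟨x, rfl⟩ := exists_f h v hv
        simp only [Finset.mem_insert, (f_inj h).mem_finset_image, Finset.mem_filter,
          Finset.mem_univ, true_and]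
        constructor
        · intro hx
          exact Or.inr hx
        · rintro (hc | hx)
          · exact absurd hc (f_ne_nv h x)
          · exact hx
    conv_lhs => rw [hrepr]
    rw [show (edgeIn (Lgraph (h+1)) (insert (nv h) ((univ.filter fun x => f h x ∈ S).image (f h)))).card
        + (edgeIn (Lgraph (h+1)) (insert (nv h) ((univ.filter fun x => f h x ∈ S).image (f h)))ᶜ).card
      = wexp (h+1) (insert (nv h) ((univ.filter fun x => f h x ∈ S).image (f h))) from rfl]
    rw [wexp_insert]

lemma sum_c (t : ℚ) (h : ℕ) :
    cSeq t (h+1) = ∑ S' ∈ univ.filter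
        (fun S' : Finset (Vt h) => Sum.inr 0 ∈ S' ∧ Sum.inr 1 ∈ S'),
      t ^ (wexp h S' + (S'ᶜ ∩ tri h).card) := by
  rw [cSeq, ZbiBC]
  simp only [one_pow, mul_one]
  refine Finset.sum_nbij' (fun S => univ.filter fun x => f h x ∈ S)
    (fun S' => S'.image (f h)) ?_ ?_ ?_ ?_ ?_
  · intro S hS
    rw [Finset.mem_filter] at hS
    obtain ⟨-, hsub, -⟩ := hS
    rw [Finset.insert_subset_iff, Finset.singleton_subset_iff] at hsub
    simp only [Finset.mem_filter, Finset.mem_univ, true_and]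
    exact ⟨hsub.1, hsub.2⟩
  · intro S' hS'
    rw [Finset.mem_filter] at hS'
    simp only [Finset.mem_filter, Finset.mem_univ, true_and, Finset.insert_subset_iff,
      Finset.singleton_subset_iff, Finset.disjoint_singleton_right]
    refine ⟨⟨?_, ?_⟩, ?_⟩
    · exact Finset.mem_image_of_mem _ hS'.2.1
    · exact Finset.mem_image_of_mem _ hS'.2.2
    · rw [Finset.mem_image]
      rintro ⟨x, -, hx⟩
      exact f_ne_nv h x hx
  · intro S hS
    rw [Finset.mem_filter] at hS
    obtain ⟨-, -, hdisj⟩ := hS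
    rw [Finset.disjoint_singleton_right] at hdisj
    ext v
    by_cases hv : v = nv h
    · subst hv
      simp only [Finset.mem_image]
      constructor
      · rintro ⟨x, -, hx⟩
        exact absurd hx (f_ne_nv h x)
      · intro hmem
        exact absurd hmem hdisj
    · obtain ⟨x, rfl⟩ := exists_f h v hv
      simp only [(f_inj h).mem_finset_image, Finset.mem_filter, Finset.mem_univ, true_and]
  · intro S' _
    ext x
    simp only [Finset.mem_filter, Finset.mem_univ, true_and, (f_inj h).mem_finset_image]
  · intro S hS
    rw [Finset.mem_filter] at hS
    obtain ⟨-, -, hdisj⟩ := hS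
    rw [Finset.disjoint_singleton_right] at hdisj
    have hrepr : S = (univ.filter fun x => f h x ∈ S).image (f h) := by
      ext v
      by_cases hv : v = nv h
      · subst hv
        simp only [Finset.mem_image]
        constructor
        · intro hmem
          exact absurd hmem hdisj
        · rintro ⟨x, -, hx⟩
          exact absurd hx (f_ne_nv h x)
      · obtain ⟨x, rfl⟩ := exists_f h v hv
        simp only [(f_inj h).mem_finset_image, Finset.mem_filter, Finset.mem_univ, true_and]
    conv_lhs => rw [hrepr]
    rw [show (edgeIn (Lgraph (h+1)) ((univ.filter fun x => f h x ∈ S).image (f h))).card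
        + (edgeIn (Lgraph (h+1)) ((univ.filter fun x => f h x ∈ S).image (f h))ᶜ).card
      = wexp (h+1) ((univ.filter fun x => f h x ∈ S).image (f h)) from rfl]
    rw [wexp_image]

end ZLrec

open ZLrec
theorem Zbi_L_recurrence (t : ℚ) :
    (aSeq t 0 = t ^ 2 ∧ cSeq t 0 = 1) ∧
    ∀ h : ℕ,
      aSeq t (h + 1) = t ^ 3 * aSeq t h + t ^ 2 * cSeq t h ∧
      cSeq t (h + 1) = aSeq t h + t * cSeq t h := by
  constructor
  · constructor
    · have hfil : (univ.filter (fun S : Finset (Fin 1 ⊕ Fin 2) =>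
          ({Sum.inr 0, Sum.inr 1, Sum.inl (Fin.last 0)} : Finset (Fin 1 ⊕ Fin 2)) ⊆ S ∧
            Disjoint S (∅ : Finset (Fin 1 ⊕ Fin 2)))) = {(univ : Finset (Fin 1 ⊕ Fin 2))} := by
        decide
      have hcard : (edgeIn (Lgraph 0) (univ : Finset (Fin 1 ⊕ Fin 2))).card
          + (edgeIn (Lgraph 0) (univ : Finset (Fin 1 ⊕ Fin 2))ᶜ).card = 2 := by decide
      rw [aSeq, ZbiBC, hfil, Finset.sum_singleton, hcard, one_pow, mul_one]
    · have hfil : (univ.filter (fun S : Finset (Fin 1 ⊕ Fin 2) =>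
          ({Sum.inr 0, Sum.inr 1} : Finset (Fin 1 ⊕ Fin 2)) ⊆ S ∧
            Disjoint S ({Sum.inl (Fin.last 0)} : Finset (Fin 1 ⊕ Fin 2))))
          = {({Sum.inr 0, Sum.inr 1} : Finset (Fin 1 ⊕ Fin 2))} := by decide
      have hcard : (edgeIn (Lgraph 0) ({Sum.inr 0, Sum.inr 1} : Finset (Fin 1 ⊕ Fin 2))).card
          + (edgeIn (Lgraph 0) ({Sum.inr 0, Sum.inr 1} : Finset (Fin 1 ⊕ Fin 2))ᶜ).card = 0 := by
        decide
      rw [cSeq, ZbiBC, hfil, Finset.sum_singleton, hcard, one_pow, mul_one, pow_zero]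
  · intro h
    constructor
    · rw [sum_a]
      have key : ∀ S' ∈ univ.filter
          (fun S' : Finset (Vt h) => Sum.inr 0 ∈ S' ∧ Sum.inr 1 ∈ S'),
          t ^ (wexp h S' + (S' ∩ tri h).card)
            = if Sum.inl (Fin.last h) ∈ S' then t ^ 3 * t ^ wexp h S'
              else t ^ 2 * t ^ wexp h S' := by
        intro S' hS'
        rw [Finset.mem_filter] at hS'
        rw [card_inter_tri h hS'.2.1 hS'.2.2]
        by_cases hhd : Sum.inl (Fin.last h) ∈ S'
        · rw [if_pos hhd, if_pos hhd, pow_add, mul_comm]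
        · rw [if_neg hhd, if_neg hhd, pow_add, mul_comm]
      rw [Finset.sum_congr rfl key, Finset.sum_ite, Finset.filter_filter,
        Finset.filter_filter, ← Finset.mul_sum, ← Finset.mul_sum, ← aSeq_eq, ← cSeq_eq]
    · rw [sum_c]
      have key : ∀ S' ∈ univ.filter
          (fun S' : Finset (Vt h) => Sum.inr 0 ∈ S' ∧ Sum.inr 1 ∈ S'),
          t ^ (wexp h S' + (S'ᶜ ∩ tri h).card)
            = if Sum.inl (Fin.last h) ∈ S' then t ^ wexp h S'
              else t * t ^ wexp h S' := by
        intro S' hS'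
        rw [Finset.mem_filter] at hS'
        rw [card_compl_inter_tri h hS'.2.1 hS'.2.2]
        by_cases hhd : Sum.inl (Fin.last h) ∈ S'
        · rw [if_pos hhd, if_pos hhd, add_zero]
        · rw [if_neg hhd, if_neg hhd, pow_succ, mul_comm]
      rw [Finset.sum_congr rfl key, Finset.sum_ite, Finset.filter_filter,
        Finset.filter_filter, ← Finset.mul_sum, ← aSeq_eq, ← cSeq_eq]
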